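/- (Lemma 3) Let A be the adjacency matrix of a finite simple undirected graph on N vertices and let A1 be the off-diagonal part of the symmetrically normalized adjacency matrix with added self-loops. Then every real eigenvalue λ of the matrix I − A1 (i.e. every λ ∈ ℝ for which there exists a nonzero x ∈ ℝ^N with (I − A1) x = λ x) satisfies 0 < λ < 2. -/

import Mathlib

open Matrix Finset

/-- Lemma 3: Every real eigenvalue `λ` of `I - A1` satisfies
`0 < λ < 2`, where `A1` is the off-diagonal part of the symmetrically
normalized adjacency matrix with added self-loops. -/
theorem gtnet_one_sub_A1_eigenvalue_bounds
    (N : ℕ) (A : Matrix (Fin N) (Fin N) ℝ)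
    (hsymm : A.IsSymm)
    (h01 : ∀ i j, A i j = 0 ∨ A i j = 1)
    (hdiag : ∀ i, A i i = 0)
    (d : Fin N → ℝ) (hd : ∀ i, d i = ∑ j, A i j)
    (A1 : Matrix (Fin N) (Fin N) ℝ)
    (hA1 : ∀ i j, A1 i j =
      if i = j then 0 else A i j / Real.sqrt ((d i + 1) * (d j + 1))) :
    ∀ (lam : ℝ) (x : Fin N → ℝ), x ≠ 0 → (1 - A1) *ᵥ x = lam • x →
      0 < lam ∧ lam < 2 := by
  intro lam x hx hev
  have hAnn : ∀ i j, 0 ≤ A i j := by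
    intro i j; rcases h01 i j with h | h <;> simp [h]
  have hAsym : ∀ i j, A i j = A j i := by
    intro i j
    have := hsymm
    rw [Matrix.IsSymm] at this
    calc A i j = Aᵀ j i := rfl
    _ = A j i := by rw [this]
  have hd1 : ∀ i, (0:ℝ) < d i + 1 := by
    intro i
    have : (0:ℝ) ≤ d i := by
      rw [hd]; exact Finset.sum_nonneg (fun j _ => hAnn i j)
    linarith
  set s : Fin N → ℝ := fun i => Real.sqrt (d i + 1) with hs
  have hspos : ∀ i, 0 < s i := fun i => Real.sqrt_pos.2 (hd1 i)
  set y : Fin N → ℝ := fun i => x i / s i with hy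
  have hxy : ∀ i, x i = s i * y i := by
    intro i
    rw [hy, mul_comm]
    exact (div_mul_cancel₀ _ (hspos i).ne').symm
  -- the three sums
  set S : ℝ := ∑ i, x i * x i with hS
  set T : ℝ := ∑ i, ∑ j, A i j * (y i * y j) with hT
  set D : ℝ := ∑ i, ∑ j, A i j * (y i * y i) with hD
  set P : ℝ := ∑ i, y i * y i with hP
  -- x ⬝ᵥ (A1 *ᵥ x) = T
  have hdotA1 : x ⬝ᵥ (A1 *ᵥ x) = T := by
    rw [hT]
    simp only [dotProduct, Matrix.mulVec, dotProduct, Finset.mul_sum]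
    apply Finset.sum_congr rfl; intro i _
    apply Finset.sum_congr rfl; intro j _
    rw [hA1]
    by_cases hij : i = j
    · simp [hij, hdiag]
    · rw [if_neg hij, hxy i, hxy j]
      have hsq : Real.sqrt ((d i + 1) * (d j + 1)) = s i * s j := by
        rw [hs]; exact Real.sqrt_mul (hd1 i).le _
      rw [hsq]
      have h1 := (hspos i).ne'
      have h2 := (hspos j).ne'
      field_simp
  -- eigen relation : S - T = lam * S
  have heig : S - T = lam * S := by
    have h1 : x ⬝ᵥ ((1 - A1) *ᵥ x) = lam * S := by
      rw [hev]
      simp [dotProduct, Finset.mul_sum, hS]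
      apply Finset.sum_congr rfl; intro i _; ring
    rw [Matrix.sub_mulVec, Matrix.one_mulVec, dotProduct_sub, hdotA1] at h1
    rw [← h1, hS]; rfl
  -- S = P + D
  have hSPD : S = P + D := by
    rw [hS, hP, hD, ← Finset.sum_add_distrib]
    apply Finset.sum_congr rfl; intro i _
    rw [hxy i]
    have hsq : s i * s i = d i + 1 := Real.mul_self_sqrt (hd1 i).le
    have : (∑ j, A i j * (y i * y i)) = d i * (y i * y i) := by
      rw [hd i, Finset.sum_mul]
    rw [this]
    nlinarith [hsq]
  -- D swap : ∑∑ A i j * (y j * y j) = D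
  have hDswap : (∑ i, ∑ j, A i j * (y j * y j)) = D := by
    rw [hD, Finset.sum_comm]
    apply Finset.sum_congr rfl; intro j _
    apply Finset.sum_congr rfl; intro i _
    rw [hAsym i j]
  -- D - T ≥ 0 and D + T ≥ 0 via squares
  have hkey : ∀ c : ℝ, c = 1 ∨ c = -1 → 0 ≤ D + c * T := by
    intro c hc
    have hnn : 0 ≤ ∑ i, ∑ j, A i j * (y i + c * y j) ^ 2 :=
      Finset.sum_nonneg fun i _ => Finset.sum_nonneg fun j _ =>
        mul_nonneg (hAnn i j) (sq_nonneg _)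
    have hexp : (∑ i, ∑ j, A i j * (y i + c * y j) ^ 2)
        = D + c ^ 2 * (∑ i, ∑ j, A i j * (y j * y j)) + 2 * c * T := by
      rw [hD, hT, Finset.mul_sum, Finset.mul_sum, ← Finset.sum_add_distrib,
        ← Finset.sum_add_distrib]
      apply Finset.sum_congr rfl; intro i _
      rw [Finset.mul_sum, Finset.mul_sum, ← Finset.sum_add_distrib,
        ← Finset.sum_add_distrib]
      apply Finset.sum_congr rfl; intro j _
      ring
    rw [hDswap] at hexp
    have hc2 : c ^ 2 = 1 := by rcases hc with h | h <;> simp [h]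
    rw [hc2] at hexp
    nlinarith [hnn, hexp]
  -- P > 0
  have hPpos : 0 < P := by
    obtain ⟨i, hi⟩ : ∃ i, x i ≠ 0 := by
      by_contra h
      push_neg at h
      exact hx (funext h)
    have hyi : y i ≠ 0 := by
      rw [hy]
      exact div_ne_zero hi (hspos i).ne'
    rw [hP]
    apply Finset.sum_pos' (fun j _ => mul_self_nonneg _)
    exact ⟨i, Finset.mem_univ i, mul_self_pos.2 hyi⟩
  have hSpos : 0 < S := by
    have h1 := hkey 1 (Or.inl rfl)
    have h2 := hkey (-1) (Or.inr rfl)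
    nlinarith [hSPD, hPpos]
  have hSmT : 0 < S - T := by
    have h2 := hkey (-1) (Or.inr rfl)
    nlinarith [hSPD, hPpos]
  have hSpT : 0 < S + T := by
    have h1 := hkey 1 (Or.inl rfl)
    nlinarith [hSPD, hPpos]
  constructor
  · nlinarith [heig, hSmT, hSpos]
  · nlinarith [heig, hSpT, hSpos]
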